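/- For any language L over an alphabet Σ with |Σ| ≥ 2, the padded language PAD(L) = {uv | u ∈ L, v ∈ Σ^{2^{|u|}}} has topological entropy zero. -/

import Mathlib

open Filter

/-- The `n`-th Myhill–Nerode approximation: `u ~ v` iff all witnesses of length at most `n`
agree. -/
def thetaN {α : Type*} (L : Set (List α)) (n : ℕ) (u v : List α) : Prop :=
  ∀ w : List α, w.length ≤ n → ((u ++ w) ∈ L ↔ (v ++ w) ∈ L)

/-- The index (number of classes) of `thetaN L n`. -/
noncomputable def indexN {α : Type*} (L : Set (List α)) (n : ℕ) : ℕ :=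
  Nat.card (Quot (thetaN L n))

/-- Topological entropy of a language, with values in `[0,∞]`. -/
noncomputable def entropy {α : Type*} (L : Set (List α)) : ENNReal :=
  Filter.limsup (fun n : ℕ => ENNReal.ofReal (Real.logb 2 (indexN L n) / n)) Filter.atTop

/-- The padded version of a language. -/
def PAD {α : Type*} (L : Set (List α)) : Set (List α) :=
  {w | ∃ u ∈ L, ∃ v : List α, v.length = 2 ^ u.length ∧ w = u ++ v}

section aux
variable {α : Type*} (L : Set (List α)) (n : ℕ)

/-- Decomposition lemma: for a "long" word `x` (i.e. `2^|x| > n`), any witness of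
membership of `x ++ w` in `PAD L` comes from a prefix `u` of `x`. -/
lemma pad_decomp {x w : List α} (hx : n < 2 ^ x.length) (hw : w.length ≤ n)
    (hmem : x ++ w ∈ PAD L) :
    ∃ u ∈ L, u.length ≤ x.length ∧ u = x.take u.length ∧
      x.length + w.length = u.length + 2 ^ u.length := by
  obtain ⟨u, hu, v, hv, he⟩ := hmem
  have hlen : x.length + w.length = u.length + v.length := by
    have := congrArg List.length he; simpa using this
  have hule : u.length ≤ x.length := by
    by_contra hgt
    push_neg at hgt
    have h1 : 2 ^ x.length < 2 ^ u.length := Nat.pow_lt_pow_right one_lt_two hgt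
    omega
  refine ⟨u, hu, hule, ?_, by omega⟩
  have h2 : (x ++ w).take u.length = u := by
    rw [he, List.take_left]
  rw [List.take_append_of_le_length hule] at h2
  exact h2.symm

/-- For long `x`, membership of `x ++ w` in `PAD L` only depends on the length of `w`. -/
lemma pad_full_level {x w w' : List α} (hx : n < 2 ^ x.length) (hw : w.length ≤ n)
    (hw' : w'.length = w.length) (hmem : x ++ w ∈ PAD L) : x ++ w' ∈ PAD L := by
  obtain ⟨u, hu, hule, hpre, hlen⟩ := pad_decomp L n hx hw hmem
  refine ⟨u, hu, x.drop u.length ++ w', ?_, ?_⟩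
  · simp only [List.length_append, List.length_drop, hw']
    omega
  · rw [← List.append_assoc]
    congr 1
    conv_lhs => rw [← List.take_append_drop u.length x]
    rw [← hpre]

/-- The (classical) finset of witness lengths for `x`. -/
noncomputable def padSet (x : List α) : Finset (Fin (n + 1)) :=
  @Finset.filter _ (fun ℓ => ∃ w : List α, w.length = (ℓ : ℕ) ∧ x ++ w ∈ PAD L)
    (Classical.decPred _) Finset.univ

lemma mem_padSet_iff {x : List α} {ℓ : Fin (n + 1)} :
    ℓ ∈ padSet L n x ↔ ∃ w : List α, w.length = (ℓ : ℕ) ∧ x ++ w ∈ PAD L := by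
  simp [padSet]

lemma pad_mem_iff_padSet {x w : List α} (hx : n < 2 ^ x.length) (hw : w.length ≤ n) :
    x ++ w ∈ PAD L ↔ (⟨w.length, by omega⟩ : Fin (n + 1)) ∈ padSet L n x := by
  rw [mem_padSet_iff]
  constructor
  · exact fun h => ⟨w, rfl, h⟩
  · rintro ⟨w', hw', h⟩
    exact pad_full_level L n hx (by omega) (hw'.symm.trans rfl) h

lemma padSet_card_le {x : List α} (hx : n < 2 ^ x.length) :
    (padSet L n x).card ≤ Nat.log 2 n + 3 := by
  set m := x.length with hm
  have hex : ∃ k, m ≤ 2 ^ k + k := ⟨m, by have := m.lt_two_pow_self; omega⟩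
  set k0 := Nat.find hex with hk0
  have hk0spec : m ≤ 2 ^ k0 + k0 := Nat.find_spec hex
  have hsub : padSet L n x ⊆ (Finset.Icc k0 (k0 + (Nat.log 2 n + 2))).image
      (fun k => (⟨(2 ^ k + k - m) % (n + 1), Nat.mod_lt _ (Nat.succ_pos n)⟩ : Fin (n + 1))) := by
    intro ℓ hℓ
    rw [mem_padSet_iff] at hℓ
    obtain ⟨w, hwlen, hmem⟩ := hℓ
    have hwn : w.length ≤ n := by have := ℓ.isLt; omega
    obtain ⟨u, _, hule, _, hlen⟩ := pad_decomp L n hx hwn hmem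
    set k := u.length with hk
    have hk0le : k0 ≤ k := Nat.find_min' hex (by omega)
    have hkup : k ≤ k0 + (Nat.log 2 n + 2) := by
      have h1 : k0 < 2 ^ k0 := k0.lt_two_pow_self
      have h2 : n < 2 ^ (Nat.log 2 n + 1) := Nat.lt_pow_succ_log_self one_lt_two n
      have h3 : 2 ^ k ≤ m + n := by omega
      have h4 : 2 ^ k < 2 ^ (k0 + 1) + 2 ^ (Nat.log 2 n + 1) := by omega
      have h5 : 2 ^ (k0 + 1) + 2 ^ (Nat.log 2 n + 1) ≤ 2 ^ (k0 + Nat.log 2 n + 2) := by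
        have a1 : 2 ^ (k0 + 1) ≤ 2 ^ (k0 + Nat.log 2 n + 1) :=
          Nat.pow_le_pow_right (by norm_num) (by omega)
        have a2 : 2 ^ (Nat.log 2 n + 1) ≤ 2 ^ (k0 + Nat.log 2 n + 1) :=
          Nat.pow_le_pow_right (by norm_num) (by omega)
        have a3 : 2 ^ (k0 + Nat.log 2 n + 2) = 2 ^ (k0 + Nat.log 2 n + 1) * 2 := by ring
        omega
      have h6 : 2 ^ k < 2 ^ (k0 + Nat.log 2 n + 2) := by omega
      have := (Nat.pow_lt_pow_iff_right (by norm_num : 1 < 2)).mp h6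
      omega
    refine Finset.mem_image.mpr ⟨k, Finset.mem_Icc.mpr ⟨hk0le, by omega⟩, ?_⟩
    have hval : 2 ^ k + k - m = (ℓ : ℕ) := by omega
    apply Fin.ext
    simp only [hval]
    exact Nat.mod_eq_of_lt ℓ.isLt
  calc (padSet L n x).card ≤ _ := Finset.card_le_card hsub
    _ ≤ (Finset.Icc k0 (k0 + (Nat.log 2 n + 2))).card := Finset.card_image_le
    _ = Nat.log 2 n + 3 := by rw [Nat.card_Icc]; omega

/-- The classifying map. -/
noncomputable def classifier (x : List α) :
    {x : List α // 2 ^ x.length ≤ n} ⊕ {s : Finset (Fin (n + 1)) // s.card ≤ Nat.log 2 n + 3} :=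
  if h : 2 ^ x.length ≤ n then .inl ⟨x, h⟩
  else .inr ⟨padSet L n x, padSet_card_le L n (by omega)⟩

lemma classifier_theta {x y : List α} (h : classifier L n x = classifier L n y) :
    thetaN (PAD L) n x y := by
  unfold classifier at h
  by_cases hx : 2 ^ x.length ≤ n <;> by_cases hy : 2 ^ y.length ≤ n <;>
    simp only [hx, hy, dif_pos, dif_neg, not_false_iff, dite_true, dite_false] at h
  · cases h
    intro w _; rfl
  · exact absurd h (by simp)
  · exact absurd h (by simp)
  · intro w hw
    rw [pad_mem_iff_padSet L n (by omega) hw, pad_mem_iff_padSet L n (by omega) hw]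
    have : padSet L n x = padSet L n y := by
      have := Sum.inr.inj h
      exact congrArg Subtype.val this
    rw [this]

end aux

section count
variable {α : Type*} [Fintype α] (L : Set (List α)) (n : ℕ)

lemma shortWords_inj :
    Function.Injective (fun (x : {x : List α // 2 ^ x.length ≤ n})
      (i : Fin (Nat.log 2 n + 1)) => x.val[(i : ℕ)]?) := by
  intro x y hxy
  have hlen : ∀ z : {x : List α // 2 ^ x.length ≤ n}, z.val.length ≤ Nat.log 2 n := by
    intro z
    have h1 : (1 : ℕ) ≤ 2 ^ z.val.length := Nat.one_le_two_pow
    have hn : n ≠ 0 := by have := z.2; omega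
    exact (Nat.le_log_iff_pow_le one_lt_two hn).mpr z.2
  apply Subtype.ext
  apply List.ext_getElem?
  intro i
  by_cases hi : i < Nat.log 2 n + 1
  · exact congrFun hxy ⟨i, hi⟩
  · rw [List.getElem?_eq_none (by have := hlen x; omega),
      List.getElem?_eq_none (by have := hlen y; omega)]

instance : Finite {x : List α // 2 ^ x.length ≤ n} :=
  Finite.of_injective _ (shortWords_inj (α := α) n)

lemma card_shortWords_le :
    Nat.card {x : List α // 2 ^ x.length ≤ n} ≤
      (Fintype.card α + 1) ^ (Nat.log 2 n + 1) := by
  have := Nat.card_le_card_of_injective _ (shortWords_inj (α := α) n)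
  simpa [Nat.card_eq_fintype_card, Fintype.card_fun] using this

lemma smallFinsets_inj : Function.Injective
    (fun (s : {s : Finset (Fin (n + 1)) // s.card ≤ Nat.log 2 n + 3})
      (i : Fin (Nat.log 2 n + 3)) => (s.val.sort (· ≤ ·))[(i : ℕ)]?) := by
  intro s t hst
  have hsort : s.val.sort (· ≤ ·) = t.val.sort (· ≤ ·) := by
    apply List.ext_getElem?
    intro i
    by_cases hi : i < Nat.log 2 n + 3
    · exact congrFun hst ⟨i, hi⟩
    · rw [List.getElem?_eq_none, List.getElem?_eq_none]
      · rw [Finset.length_sort]; have := t.2; omega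
      · rw [Finset.length_sort]; have := s.2; omega
  apply Subtype.ext
  rw [← Finset.sort_toFinset s.val (· ≤ ·), ← Finset.sort_toFinset t.val (· ≤ ·), hsort]

lemma card_smallFinsets_le :
    Nat.card {s : Finset (Fin (n + 1)) // s.card ≤ Nat.log 2 n + 3} ≤
      (n + 2) ^ (Nat.log 2 n + 3) := by
  have := Nat.card_le_card_of_injective _ (smallFinsets_inj n)
  simpa [Nat.card_eq_fintype_card, Fintype.card_fun] using this

lemma classifier_surj_quot : ∃ F : ({x : List α // 2 ^ x.length ≤ n} ⊕
      {s : Finset (Fin (n + 1)) // s.card ≤ Nat.log 2 n + 3}) → Quot (thetaN (PAD L) n),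
    Function.Surjective F := by
  classical
  refine ⟨fun t => if h : ∃ x, classifier L n x = t then Quot.mk _ h.choose
    else Quot.mk _ [], ?_⟩
  intro q
  obtain ⟨x, rfl⟩ := Quot.exists_rep q
  refine ⟨classifier L n x, ?_⟩
  have hex : ∃ y, classifier L n y = classifier L n x := ⟨x, rfl⟩
  show (if h : ∃ y, classifier L n y = classifier L n x then
      Quot.mk (thetaN (PAD L) n) h.choose else Quot.mk (thetaN (PAD L) n) []) = _
  rw [dif_pos hex]
  exact Quot.sound (classifier_theta L n hex.choose_spec)

lemma finite_quot_pad : Finite (Quot (thetaN (PAD L) n)) := by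
  obtain ⟨F, hF⟩ := classifier_surj_quot L n
  exact Finite.of_surjective F hF

lemma one_le_indexN_pad : 1 ≤ indexN (PAD L) n := by
  haveI := finite_quot_pad L n
  haveI : Nonempty (Quot (thetaN (PAD L) n)) := ⟨Quot.mk _ []⟩
  exact Nat.card_pos

lemma indexN_pad_le : indexN (PAD L) n ≤
    (Fintype.card α + 1) ^ (Nat.log 2 n + 1) + (n + 2) ^ (Nat.log 2 n + 3) := by
  obtain ⟨F, hF⟩ := classifier_surj_quot L n
  calc indexN (PAD L) n ≤ Nat.card ({x : List α // 2 ^ x.length ≤ n} ⊕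
        {s : Finset (Fin (n + 1)) // s.card ≤ Nat.log 2 n + 3}) :=
      Nat.card_le_card_of_surjective F hF
    _ = Nat.card {x : List α // 2 ^ x.length ≤ n} +
        Nat.card {s : Finset (Fin (n + 1)) // s.card ≤ Nat.log 2 n + 3} := Nat.card_sum
    _ ≤ _ := Nat.add_le_add (card_shortWords_le n) (card_smallFinsets_le n)

end count

section analysis

lemma natB_le (c n : ℕ) : (c + 1) ^ (Nat.log 2 n + 1) + (n + 2) ^ (Nat.log 2 n + 3)
    ≤ (n + c + 2) ^ (Nat.log 2 n + 4) := by
  set Lg := Nat.log 2 n with hLg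
  have h1 : (c + 1) ^ (Lg + 1) ≤ (n + c + 2) ^ (Lg + 3) :=
    le_trans (Nat.pow_le_pow_left (by omega) _) (Nat.pow_le_pow_right (by omega) (by omega))
  have h2 : (n + 2) ^ (Lg + 3) ≤ (n + c + 2) ^ (Lg + 3) := Nat.pow_le_pow_left (by omega) _
  have h3 : (n + c + 2) ^ (Lg + 4) = (n + c + 2) ^ (Lg + 3) * (n + c + 2) := by ring
  have h4 : (n + c + 2) ^ (Lg + 3) * 2 ≤ (n + c + 2) ^ (Lg + 3) * (n + c + 2) :=
    Nat.mul_le_mul_left _ (by omega)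
  omega

lemma logb_indexN_pad_le {α : Type*} [Fintype α] (L : Set (List α)) (n : ℕ) :
    Real.logb 2 (indexN (PAD L) n) ≤
      ((Nat.log 2 n : ℝ) + 4) * Real.logb 2 ((n : ℝ) + Fintype.card α + 2) := by
  set c := Fintype.card α
  have h1 : indexN (PAD L) n ≤ (n + c + 2) ^ (Nat.log 2 n + 4) :=
    le_trans (indexN_pad_le L n) (natB_le c n)
  have h2 : Real.logb 2 (indexN (PAD L) n) ≤
      Real.logb 2 (((n + c + 2) ^ (Nat.log 2 n + 4) : ℕ) : ℝ) := by
    apply Real.logb_le_logb_of_le one_lt_two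
    · exact_mod_cast one_le_indexN_pad L n
    · exact_mod_cast h1
  refine h2.trans ?_
  have : (((n + c + 2) ^ (Nat.log 2 n + 4) : ℕ) : ℝ) =
      ((n : ℝ) + c + 2) ^ (Nat.log 2 n + 4) := by push_cast; ring
  rw [this, Real.logb_pow]
  push_cast
  ring_nf
  exact le_refl _

end analysis

theorem entropy_pad_zero {α : Type*} [Fintype α] (h : 2 ≤ Fintype.card α)
    (L : Set (List α)) : entropy (PAD L) = 0 := by
  set c := Fintype.card α with hc
  -- the comparison function tends to 0
  have hφ : Filter.Tendsto (fun x : ℝ => (2 * Real.log x + 4) * (2 * Real.log x) / x)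
      atTop (nhds 0) := by
    have h2 : (fun x : ℝ => (2 * Real.log x + 4) * (2 * Real.log x)) =o[atTop] id := by
      have hsq : (fun x : ℝ => Real.log x ^ 2) =o[atTop] id := Real.isLittleO_pow_log_id_atTop
      have hlog : Real.log =o[atTop] (id : ℝ → ℝ) := Real.isLittleO_log_id_atTop
      have := (hsq.const_mul_left 4).add (hlog.const_mul_left 8)
      exact this.congr_left (fun x => by ring)
    exact h2.tendsto_div_nhds_zero
  have hD : Filter.Tendsto (fun n : ℕ => ((n : ℝ) + c + 2)) atTop atTop := by
    apply tendsto_atTop_add_const_right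
    apply tendsto_atTop_add_const_right
    exact tendsto_natCast_atTop_atTop
  have hg : Filter.Tendsto (fun n : ℕ =>
      2 * ((2 * Real.log ((n : ℝ) + c + 2) + 4) * (2 * Real.log ((n : ℝ) + c + 2)) /
        ((n : ℝ) + c + 2))) atTop (nhds 0) := by
    have := (hφ.comp hD).const_mul (2 : ℝ)
    simpa [Function.comp] using this
  have key : Filter.Tendsto (fun n : ℕ =>
      ENNReal.ofReal (Real.logb 2 (indexN (PAD L) n) / n)) atTop (nhds 0) := by
    rw [show (0 : ENNReal) = ENNReal.ofReal 0 by simp]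
    apply ENNReal.tendsto_ofReal
    apply squeeze_zero' ?_ ?_ hg
    · filter_upwards with n
      apply div_nonneg _ (Nat.cast_nonneg n)
      apply Real.logb_nonneg one_lt_two
      exact_mod_cast one_le_indexN_pad L n
    · filter_upwards [eventually_ge_atTop (c + 2), eventually_ge_atTop 1] with n hn hn1
      set D : ℝ := (n : ℝ) + c + 2 with hDdef
      have hncast : (0 : ℝ) ≤ (n : ℝ) := Nat.cast_nonneg n
      have hccast : (0 : ℝ) ≤ (c : ℝ) := Nat.cast_nonneg c
      have hD1 : (1 : ℝ) ≤ D := by rw [hDdef]; linarith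
      have hlogD : 0 ≤ Real.log D := Real.log_nonneg hD1
      have hlog2 : (0.6931471803 : ℝ) < Real.log 2 := Real.log_two_gt_d9
      have hlogb_le : Real.logb 2 D ≤ 2 * Real.log D := by
        rw [Real.logb, div_le_iff₀ (by linarith : (0:ℝ) < Real.log 2)]
        nlinarith
      have hnatlog : (Nat.log 2 n : ℝ) ≤ 2 * Real.log D := by
        have e1 : (Nat.log 2 n : ℝ) ≤ Real.logb 2 n := Real.natLog_le_logb n 2
        have e2 : Real.logb 2 (n : ℝ) ≤ Real.logb 2 D := by
          apply Real.logb_le_logb_of_le one_lt_two (by exact_mod_cast hn1) (by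
            rw [hDdef]; push_cast; linarith)
        have e3 : Real.logb 2 D ≤ 2 * Real.log D := hlogb_le
        linarith
      have step1 : Real.logb 2 (indexN (PAD L) n) ≤
          ((Nat.log 2 n : ℝ) + 4) * Real.logb 2 D := logb_indexN_pad_le L n
      have hlogbD0 : 0 ≤ Real.logb 2 D := Real.logb_nonneg one_lt_two hD1
      have step2 : ((Nat.log 2 n : ℝ) + 4) * Real.logb 2 D ≤
          (2 * Real.log D + 4) * (2 * Real.log D) := by
        apply mul_le_mul (by linarith) hlogb_le hlogbD0 (by linarith)
      set A : ℝ := (2 * Real.log D + 4) * (2 * Real.log D) with hA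
      have hA0 : 0 ≤ A := by positivity
      have hn0 : (0 : ℝ) < n := by exact_mod_cast (by omega : 0 < n)
      have hD0 : (0 : ℝ) < D := by linarith
      have hD2n : D ≤ 2 * n := by
        rw [hDdef]
        have : (c : ℝ) + 2 ≤ n := by exact_mod_cast hn
        linarith
      calc Real.logb 2 (indexN (PAD L) n) / n ≤ A / n := by
            gcongr
            exact step1.trans step2
        _ ≤ 2 * (A / D) := by
            rw [mul_div_assoc'] at *
            rw [div_le_div_iff₀ hn0 hD0]
            nlinarith
  exact key.limsup_eq
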